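/- Let μ be a Borel probability measure on ℝ with finite first moment, F_μ its distribution function and F_μ⁻¹(t) = sup{x : F_μ(x) ≤ t} its upper quantile function. Then for every n ≥ 1, the uniform discrete measure ν_n = (1/n) Σ_{i=1}^n δ_{x_i} with x_i = F_μ⁻¹((2i−1)/(2n)) minimizes the L¹-Kantorovich distance d₁(ν, μ) over all measures ν of the form (1/n) Σ_{i=1}^n δ_{y_i} with y_1 ≤ … ≤ y_n real. -/

import Mathlib

open Set MeasureTheory
open scoped ENNReal

/-- The distribution function of a measure on `ℝ`. -/
noncomputable def cdf (μ : Measure ℝ) (x : ℝ) : ℝ := (μ (Set.Iic x)).toReal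

/-- The (upper) quantile function `F_μ⁻¹(t) = sup {x : F_μ(x) ≤ t}`. -/
noncomputable def quantile (μ : Measure ℝ) (t : ℝ) : ℝ := sSup {x : ℝ | cdf μ x ≤ t}

/-- The discrete measure `(1/n) ∑_{i=1}^n δ_{y_i}`. -/
noncomputable def unifAtoms (n : ℕ) (y : Fin n → ℝ) : Measure ℝ :=
  (n : ℝ≥0∞)⁻¹ • ∑ i, Measure.dirac (y i)

set_option linter.unusedSectionVars false

section Aux
variable (μ : Measure ℝ) [IsProbabilityMeasure μ]

variable (μ : Measure ℝ) [IsProbabilityMeasure μ]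

lemma cdf_eq_prob : cdf μ = ProbabilityTheory.cdf μ := by
  ext x; rw [ProbabilityTheory.cdf_eq_real]; rfl

lemma cdf_mono : Monotone (cdf μ) := by
  rw [cdf_eq_prob]; exact ProbabilityTheory.monotone_cdf μ

lemma cdf_nonneg' (x : ℝ) : 0 ≤ cdf μ x := ENNReal.toReal_nonneg

lemma cdf_le_one' (x : ℝ) : cdf μ x ≤ 1 := by
  rw [cdf_eq_prob]; exact ProbabilityTheory.cdf_le_one μ x

lemma quantile_set_nonempty {t : ℝ} (ht : 0 < t) : {x : ℝ | cdf μ x ≤ t}.Nonempty := by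
  have h := (cdf_eq_prob μ) ▸ ProbabilityTheory.tendsto_cdf_atBot μ
  have : ∀ᶠ x in Filter.atBot, cdf μ x ≤ t := by
    filter_upwards [h.eventually_le_const ht] with x hx using hx
  obtain ⟨x, hx⟩ := this.exists
  exact ⟨x, hx⟩

lemma quantile_set_bddAbove {t : ℝ} (ht : t < 1) : BddAbove {x : ℝ | cdf μ x ≤ t} := by
  have h := (cdf_eq_prob μ) ▸ ProbabilityTheory.tendsto_cdf_atTop μ
  have : ∀ᶠ x in Filter.atTop, t < cdf μ x := h.eventually_const_lt ht
  obtain ⟨x0, hx0⟩ := this.exists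
  refine ⟨x0, fun z hz => ?_⟩
  by_contra hzx
  exact absurd (le_trans (cdf_mono μ (le_of_not_ge hzx)) hz) (not_le.2 hx0)

lemma le_cdf_quantile {t : ℝ} (ht : 0 < t) (ht1 : t < 1) : t ≤ cdf μ (quantile μ t) := by
  set s := quantile μ t with hs
  have hrc : ContinuousWithinAt (cdf μ) (Set.Ioi s) s := by
    rw [cdf_eq_prob]
    exact ((ProbabilityTheory.cdf μ).right_continuous s).mono Ioi_subset_Ici_self
  have hev : ∀ᶠ z in nhdsWithin s (Set.Ioi s), t ≤ cdf μ z := by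
    filter_upwards [self_mem_nhdsWithin] with z hz
    by_contra h
    exact absurd (le_csSup (quantile_set_bddAbove μ ht1) (le_of_not_ge h : cdf μ z ≤ t))
      (not_le.2 hz)
  exact ge_of_tendsto hrc hev

lemma cdf_le_of_lt_quantile {t x : ℝ} (ht : 0 < t) (hx : x < quantile μ t) : cdf μ x ≤ t := by
  obtain ⟨z, hz, hxz⟩ := exists_lt_of_lt_csSup (quantile_set_nonempty μ ht) hx
  exact le_trans (cdf_mono μ hxz.le) hz

lemma quantile_mono {t t' : ℝ} (ht : 0 < t) (ht1 : t' < 1) (h : t ≤ t') :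
    quantile μ t ≤ quantile μ t' :=
  csSup_le_csSup (quantile_set_bddAbove μ ht1) (quantile_set_nonempty μ ht)
    (fun _ hz => le_trans hz h)

end Aux

lemma cdf_unifAtoms (n : ℕ) (hn : 0 < n) (y : Fin n → ℝ) (x : ℝ) :
    cdf (unifAtoms n y) x
      = ((Finset.univ.filter (fun i => y i ≤ x)).card : ℝ) / n := by
  have hne : (n : ℝ≥0∞) ≠ 0 := Nat.cast_ne_zero.2 hn.ne'
  unfold cdf unifAtoms
  rw [Measure.smul_apply, smul_eq_mul, Measure.finset_sum_apply]
  have h1 : ∀ i : Fin n, Measure.dirac (y i) (Set.Iic x)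
      = if y i ≤ x then (1 : ℝ≥0∞) else 0 := by
    intro i
    rw [Measure.dirac_apply' _ measurableSet_Iic]
    simp [Set.indicator_apply, Set.mem_Iic]
  simp_rw [h1, Finset.sum_boole]
  rw [ENNReal.toReal_mul, ENNReal.toReal_inv]
  simp [div_eq_inv_mul]

section Aux2
variable (μ : Measure ℝ) [IsProbabilityMeasure μ]

lemma cdf_measurable : Measurable (cdf μ) := by
  have : Monotone (cdf μ) := fun a b hab =>
    ENNReal.toReal_mono (measure_ne_top μ _) (measure_mono (Set.Iic_subset_Iic.2 hab))
  exact this.measurable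

lemma moment_bound (hmom : Integrable (fun x : ℝ => |x|) μ) (a : ℝ) :
    ∫⁻ t, ENNReal.ofReal (|a| + |t|) ∂μ < ∞ := by
  rw [lintegral_congr (fun t => ENNReal.ofReal_add (abs_nonneg a) (abs_nonneg t)),
    lintegral_add_left (by measurability)]
  rw [lintegral_const]
  have h2 : ∫⁻ t, ENNReal.ofReal |t| ∂μ < ∞ := by
    have := hmom.hasFiniteIntegral
    rw [hasFiniteIntegral_iff_norm] at this
    simpa [Real.norm_eq_abs, abs_abs] using this
  simp only [measure_univ, mul_one]
  exact ENNReal.add_lt_top.2 ⟨ENNReal.ofReal_lt_top, h2⟩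

lemma lint_Iio (a : ℝ) (hmom : Integrable (fun x : ℝ => |x|) μ) :
    ∫⁻ x in Set.Iio a, ENNReal.ofReal (cdf μ x) < ∞ := by
  have hcong : ∀ x, ENNReal.ofReal (cdf μ x) = μ (Set.Iic x) := fun x =>
    ENNReal.ofReal_toReal (measure_ne_top μ _)
  simp_rw [hcong]
  have hrw : ∀ x : ℝ, μ (Set.Iic x) = ∫⁻ t, (Set.Ici t).indicator 1 x ∂μ := by
    intro x
    rw [← lintegral_indicator_one measurableSet_Iic]
    refine lintegral_congr fun t => ?_
    simp [Set.indicator_apply, Set.mem_Iic, Set.mem_Ici]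
  simp_rw [hrw]
  rw [lintegral_lintegral_swap]
  · have hinner : ∀ t : ℝ, ∫⁻ x in Set.Iio a, (Set.Ici t).indicator 1 x
        = ENNReal.ofReal (a - t) := by
      intro t
      rw [lintegral_indicator_one measurableSet_Ici, Measure.restrict_apply measurableSet_Ici]
      rw [Set.Ici_inter_Iio, Real.volume_Ico]
    simp_rw [hinner]
    calc ∫⁻ t, ENNReal.ofReal (a - t) ∂μ ≤ ∫⁻ t, ENNReal.ofReal (|a| + |t|) ∂μ := by
          refine lintegral_mono fun t => ENNReal.ofReal_le_ofReal ?_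
          calc a - t ≤ |a - t| := le_abs_self _
            _ ≤ |a| + |t| := abs_sub _ _
      _ < ∞ := moment_bound μ hmom a
  · apply Measurable.aemeasurable
    have hset : MeasurableSet {p : ℝ × ℝ | p.2 ≤ p.1} :=
      measurableSet_le measurable_snd measurable_fst
    have heq : (Function.uncurry fun (x t : ℝ) => (Set.Ici t).indicator (1 : ℝ → ℝ≥0∞) x)
        = {p : ℝ × ℝ | p.2 ≤ p.1}.indicator 1 := by
      ext p
      simp [Function.uncurry, Set.indicator_apply, Set.mem_Ici]
    rw [heq]
    exact measurable_const.indicator hset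

lemma one_sub_cdf (x : ℝ) : 1 - cdf μ x = (μ (Set.Ioi x)).toReal := by
  have hc : μ (Set.Ioi x) = 1 - μ (Set.Iic x) := by
    rw [← Set.compl_Iic, prob_compl_eq_one_sub measurableSet_Iic]
  rw [hc, ENNReal.toReal_sub_of_le prob_le_one ENNReal.one_ne_top, ENNReal.toReal_one]
  rfl

lemma lint_Ici (a : ℝ) (hmom : Integrable (fun x : ℝ => |x|) μ) :
    ∫⁻ x in Set.Ici a, ENNReal.ofReal (1 - cdf μ x) < ∞ := by
  have hcong : ∀ x, ENNReal.ofReal (1 - cdf μ x) = μ (Set.Ioi x) := fun x => by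
    rw [one_sub_cdf]; exact ENNReal.ofReal_toReal (measure_ne_top μ _)
  simp_rw [hcong]
  have hrw : ∀ x : ℝ, μ (Set.Ioi x) = ∫⁻ t, (Set.Iio t).indicator 1 x ∂μ := by
    intro x
    rw [← lintegral_indicator_one measurableSet_Ioi]
    refine lintegral_congr fun t => ?_
    simp [Set.indicator_apply, Set.mem_Ioi, Set.mem_Iio]
  simp_rw [hrw]
  rw [lintegral_lintegral_swap]
  · have hinner : ∀ t : ℝ, ∫⁻ x in Set.Ici a, (Set.Iio t).indicator 1 x
        = ENNReal.ofReal (t - a) := by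
      intro t
      rw [lintegral_indicator_one measurableSet_Iio, Measure.restrict_apply measurableSet_Iio]
      rw [Set.Iio_inter_Ici, Real.volume_Ico]
    simp_rw [hinner]
    calc ∫⁻ t, ENNReal.ofReal (t - a) ∂μ ≤ ∫⁻ t, ENNReal.ofReal (|a| + |t|) ∂μ := by
          refine lintegral_mono fun t => ENNReal.ofReal_le_ofReal ?_
          calc t - a ≤ |t - a| := le_abs_self _
            _ ≤ |t| + |a| := abs_sub _ _
            _ = |a| + |t| := add_comm _ _
      _ < ∞ := moment_bound μ hmom a
  · apply Measurable.aemeasurable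
    have hset : MeasurableSet {p : ℝ × ℝ | p.1 < p.2} :=
      measurableSet_lt measurable_fst measurable_snd
    have heq : (Function.uncurry fun (x t : ℝ) => (Set.Iio t).indicator (1 : ℝ → ℝ≥0∞) x)
        = {p : ℝ × ℝ | p.1 < p.2}.indicator 1 := by
      ext p
      simp [Function.uncurry, Set.indicator_apply, Set.mem_Iio]
    rw [heq]
    exact measurable_const.indicator hset

lemma integrable_cdf_sub_ind (hmom : Integrable (fun x : ℝ => |x|) μ) (a : ℝ) :
    Integrable (fun x : ℝ => cdf μ x - if a ≤ x then (1 : ℝ) else 0) := by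
  constructor
  · exact ((cdf_measurable μ).sub
      (measurable_const.ite measurableSet_Ici measurable_const)).aestronglyMeasurable
  · rw [hasFiniteIntegral_iff_norm]
    rw [← lintegral_add_compl (μ := (volume : Measure ℝ))
      (f := fun x => ENNReal.ofReal ‖cdf μ x - if a ≤ x then (1:ℝ) else 0‖)
      (measurableSet_Iio (a := a))]
    have h1 : ∫⁻ x in Set.Iio a, ENNReal.ofReal ‖cdf μ x - if a ≤ x then (1:ℝ) else 0‖
        = ∫⁻ x in Set.Iio a, ENNReal.ofReal (cdf μ x) := by
      refine setLIntegral_congr_fun measurableSet_Iio ?_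
      intro x hx
      dsimp only
      rw [if_neg (not_le.2 (Set.mem_Iio.1 hx))]
      rw [Real.norm_eq_abs, sub_zero, abs_of_nonneg (show (0:ℝ) ≤ cdf μ x from ENNReal.toReal_nonneg)]
    have h2 : ∫⁻ x in (Set.Iio a)ᶜ, ENNReal.ofReal ‖cdf μ x - if a ≤ x then (1:ℝ) else 0‖
        = ∫⁻ x in Set.Ici a, ENNReal.ofReal (1 - cdf μ x) := by
      rw [Set.compl_Iio]
      refine setLIntegral_congr_fun measurableSet_Ici ?_
      intro x hx
      dsimp only
      rw [if_pos (show a ≤ x from hx), Real.norm_eq_abs, abs_of_nonpos (by linarith [cdf_le_one' μ x])]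
      ring_nf
    rw [h1, h2]
    exact ENNReal.add_lt_top.2 ⟨lint_Iio μ a hmom, lint_Ici μ a hmom⟩

end Aux2

section Key
variable (μ : Measure ℝ) [IsProbabilityMeasure μ]

lemma key_pointwise (n : ℕ) (hn : 0 < n) (x : ℝ) (j : ℕ) (hj : j ≤ n) :
    |cdf μ x - cdf (unifAtoms n (fun i => quantile μ ((2 * (i : ℝ) + 1) / (2 * n)))) x|
      ≤ |cdf μ x - (j : ℝ) / n| := by
  have hn' : (0 : ℝ) < n := Nat.cast_pos.2 hn
  set t : Fin n → ℝ := fun i => (2 * (i : ℝ) + 1) / (2 * n) with ht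
  have htpos : ∀ i, 0 < t i := fun i => by
    apply div_pos <;> positivity
  have htlt : ∀ i, t i < 1 := by
    intro i
    have h1 : (i : ℝ) + 1 ≤ n := by exact_mod_cast i.isLt
    rw [div_lt_one (by positivity)]
    linarith
  have htmono : Monotone t := by
    intro i i' h
    have : (i : ℝ) ≤ (i' : ℝ) := by exact_mod_cast h
    show (2 * (i : ℝ) + 1) / (2 * n) ≤ (2 * (i' : ℝ) + 1) / (2 * n)
    gcongr <;> linarith
  set xq : Fin n → ℝ := fun i => quantile μ (t i) with hxq
  have hxmono : Monotone xq := fun i i' h =>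
    quantile_mono μ (htpos i) (htlt i') (htmono h)
  set s := Finset.univ.filter (fun i => xq i ≤ x) with hsdef
  set k := s.card with hk
  have hkn : k ≤ n := by
    calc k ≤ Finset.univ.card := Finset.card_filter_le _ _
      _ = n := Finset.card_fin n
  have hG : cdf (unifAtoms n xq) x = (k : ℝ) / n := cdf_unifAtoms n hn xq x
  -- lower bound on cdf
  have hlow : (2 * (k : ℝ) - 1) / (2 * n) ≤ cdf μ x := by
    rcases Nat.eq_zero_or_pos k with hk0 | hk0
    · rw [hk0]
      have := cdf_nonneg' μ x
      have h0 : (2 * ((0:ℕ) : ℝ) - 1) / (2 * n) < 0 := by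
        apply div_neg_of_neg_of_pos <;> [norm_num; positivity]
      linarith
    · have hne : s.Nonempty := Finset.card_pos.1 hk0
      set i0 := s.max' hne with hi0
      have hi0s : i0 ∈ s := s.max'_mem hne
      have hsub : s ⊆ Finset.Iic i0 := fun i hi => Finset.mem_Iic.2 (s.le_max' i hi)
      have hcard : k ≤ (i0 : ℕ) + 1 := by
        calc k ≤ (Finset.Iic i0).card := Finset.card_le_card hsub
          _ = (i0 : ℕ) + 1 := Fin.card_Iic i0
      have hxi0 : xq i0 ≤ x := (Finset.mem_filter.1 hi0s).2
      have h1 : t i0 ≤ cdf μ x :=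
        le_trans (le_cdf_quantile μ (htpos i0) (htlt i0)) (cdf_mono μ hxi0)
      have h2 : (k : ℝ) ≤ (i0 : ℝ) + 1 := by exact_mod_cast hcard
      have : (2 * (k : ℝ) - 1) / (2 * n) ≤ t i0 := by
        show (2 * (k : ℝ) - 1) / (2 * n) ≤ (2 * (i0 : ℝ) + 1) / (2 * n)
        gcongr <;> linarith
      linarith
  have hup : cdf μ x ≤ (2 * (k : ℝ) + 1) / (2 * n) := by
    rcases eq_or_lt_of_le hkn with hkn' | hkn'
    · have h1 := cdf_le_one' μ x
      have : (1 : ℝ) ≤ (2 * (k : ℝ) + 1) / (2 * n) := by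
        rw [le_div_iff₀ (by positivity), hkn']
        push_cast
        linarith
      linarith
    · have hxk : x < xq ⟨k, hkn'⟩ := by
        by_contra h
        push_neg at h
        have hsub : Finset.Iic (⟨k, hkn'⟩ : Fin n) ⊆ s := by
          intro i hi
          refine Finset.mem_filter.2 ⟨Finset.mem_univ i, ?_⟩
          exact le_trans (hxmono (Finset.mem_Iic.1 hi)) h
        have hcI : (Finset.Iic (⟨k, hkn'⟩ : Fin n)).card = k + 1 := by
          rw [Fin.card_Iic]
        have : k + 1 ≤ k := hcI ▸ Finset.card_le_card hsub
        omega
      have h1 : cdf μ x ≤ t ⟨k, hkn'⟩ :=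
        cdf_le_of_lt_quantile μ (htpos _) hxk
      have : t ⟨k, hkn'⟩ = (2 * (k : ℝ) + 1) / (2 * n) := rfl
      linarith
  -- |F - k/n| ≤ 1/(2n)
  have hhalf : |cdf μ x - (k : ℝ) / n| ≤ 1 / (2 * n) := by
    rw [abs_le]
    constructor
    · have : (2 * (k : ℝ) - 1) / (2 * n) = (k : ℝ) / n - 1 / (2 * n) := by
        field_simp
      rw [this] at hlow
      linarith
    · have : (2 * (k : ℝ) + 1) / (2 * n) = (k : ℝ) / n + 1 / (2 * n) := by
        field_simp
      rw [this] at hup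
      linarith
  rw [hG]
  rcases eq_or_ne j k with hjk | hjk
  · rw [hjk]
  · have hkj : (1 : ℝ) ≤ |(k : ℝ) - (j : ℝ)| := by
      rcases Nat.lt_or_ge k j with h | h
      · have h' : (k : ℝ) + 1 ≤ j := by exact_mod_cast h
        rw [abs_sub_comm, abs_of_nonneg (by linarith)]
        linarith
      · have h' : j < k := lt_of_le_of_ne h hjk
        have h'' : (j : ℝ) + 1 ≤ k := by exact_mod_cast h'
        rw [abs_of_nonneg (by linarith)]
        linarith
    have hgrid : 1 / (n : ℝ) ≤ |(k : ℝ) / n - (j : ℝ) / n| := by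
      rw [div_sub_div_same, abs_div, abs_of_pos hn', div_le_div_iff₀ hn' hn', one_mul]
      nlinarith
    have htri : |(k : ℝ) / n - (j : ℝ) / n|
        ≤ |(k : ℝ) / n - cdf μ x| + |cdf μ x - (j : ℝ) / n| := abs_sub_le _ _ _
    have habs : |(k : ℝ) / n - cdf μ x| = |cdf μ x - (k : ℝ) / n| := abs_sub_comm _ _
    have h2n : 1 / (n : ℝ) = 1 / (2 * n) + 1 / (2 * n) := by field_simp; ring
    linarith

end Key

section Final
variable (μ : Measure ℝ) [IsProbabilityMeasure μ]

lemma integrable_diff (hmom : Integrable (fun x : ℝ => |x|) μ) (n : ℕ) (hn : 0 < n)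
    (y : Fin n → ℝ) :
    Integrable (fun x : ℝ => cdf μ x - cdf (unifAtoms n y) x) := by
  have hn' : (n : ℝ) ≠ 0 := Nat.cast_ne_zero.2 hn.ne'
  have heq : (fun x : ℝ => cdf μ x - cdf (unifAtoms n y) x)
      = fun x => (n : ℝ)⁻¹ * ∑ i : Fin n, (cdf μ x - if y i ≤ x then (1 : ℝ) else 0) := by
    ext x
    rw [cdf_unifAtoms n hn]
    have hsum : ∑ i : Fin n, (cdf μ x - if y i ≤ x then (1 : ℝ) else 0)
        = n * cdf μ x - ((Finset.univ.filter fun i => y i ≤ x).card : ℝ) := by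
      rw [Finset.sum_sub_distrib, Finset.sum_const, Finset.card_univ, Fintype.card_fin,
        Finset.sum_boole, nsmul_eq_mul]
    rw [hsum]
    field_simp
  rw [heq]
  exact (integrable_finset_sum _ fun i _ => integrable_cdf_sub_ind μ hmom (y i)).const_mul _

end Final

theorem stmt17 (μ : Measure ℝ) [IsProbabilityMeasure μ]
    (hmom : Integrable (fun x : ℝ => |x|) μ) (n : ℕ) (hn : 0 < n)
    (y : Fin n → ℝ) (hy : Monotone y) :
    ∫ x : ℝ, |cdf μ x
        - cdf (unifAtoms n (fun i => quantile μ ((2 * (i : ℝ) + 1) / (2 * n)))) x|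
      ≤ ∫ x : ℝ, |cdf μ x - cdf (unifAtoms n y) x| := by
  have hint1 := (integrable_diff μ hmom n hn
    (fun i => quantile μ ((2 * (i : ℝ) + 1) / (2 * n)))).abs
  have hint2 := (integrable_diff μ hmom n hn y).abs
  refine integral_mono hint1 hint2 fun x => ?_
  rw [cdf_unifAtoms n hn y x]
  exact key_pointwise μ n hn x _
    ((Finset.card_filter_le _ _).trans (by simp))
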